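/- For every r ≥ 3 there exists a constant c > 0 such that for every n ≥ 1 there exists a family F of vectors in {0,1}^n containing no focal family of size r with |F| ≥ c·(2/r^{1/(r−1)})^n. -/

import Mathlib

/-- A family consisting of a focus vector `x₀` and `m` further vectors `xs 0, …, xs (m-1)`
in `α^n` is *focal with focus `x₀`* if for every coordinate `i`, at most one of the
vectors `xs j` differs from `x₀` at `i` (equivalently, at least `m - 1` of the `m`
entries `xs j i` are equal to `x₀ i`). -/
def IsFocalWithFocus {α : Type*} {n m : ℕ} (x₀ : Fin n → α) (xs : Fin m → Fin n → α) : Prop :=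
  ∀ i : Fin n, ∀ j j' : Fin m, xs j i ≠ x₀ i → xs j' i ≠ x₀ i → j = j'

/-- A family `F` of vectors contains a focal family of size `r` if there are `r`
distinct members `x₀, xs 0, …, xs (r-2)` of `F` that are focal with focus `x₀`. -/
def ContainsFocalFamily {α : Type*} {n : ℕ} (F : Finset (Fin n → α)) (r : ℕ) : Prop :=
  ∃ x₀ ∈ F, ∃ xs : Fin (r - 1) → Fin n → α,
    (∀ j, xs j ∈ F) ∧ Function.Injective xs ∧ (∀ j, xs j ≠ x₀) ∧ IsFocalWithFocus x₀ xs

open Finset in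
private lemma bool_eq_of_ne {a b c : Bool} (h1 : a ≠ c) (h2 : b ≠ c) : a = b := by
  cases a <;> cases b <;> cases c <;> simp_all

private lemma desc_pow_le {m N r : ℕ} (h : m ≤ N) :
    m.choose r * N ^ r ≤ N.choose r * m ^ r := by
  have key : m.descFactorial r * N ^ r ≤ N.descFactorial r * m ^ r := by
    rw [Nat.descFactorial_eq_prod_range, Nat.descFactorial_eq_prod_range]
    have hN : N ^ r = ∏ _i ∈ Finset.range r, N := by simp
    have hm : m ^ r = ∏ _i ∈ Finset.range r, m := by simp
    rw [hN, hm, ← Finset.prod_mul_distrib, ← Finset.prod_mul_distrib]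
    apply Finset.prod_le_prod' 
    intro i _
    calc (m - i) * N = m * N - i * N := Nat.sub_mul m i N
      _ ≤ N * m - i * m := by
          rw [mul_comm m N]
          exact Nat.sub_le_sub_left (Nat.mul_le_mul_left i h) (N * m)
      _ = (N - i) * m := (Nat.sub_mul N i m).symm
  rw [Nat.descFactorial_eq_factorial_mul_choose, Nat.descFactorial_eq_factorial_mul_choose] at key
  have : Nat.factorial r * (m.choose r * N ^ r) ≤ Nat.factorial r * (N.choose r * m ^ r) := by
    calc Nat.factorial r * (m.choose r * N ^ r) = Nat.factorial r * m.choose r * N ^ r := by ring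
      _ ≤ Nat.factorial r * N.choose r * m ^ r := key
      _ = Nat.factorial r * (N.choose r * m ^ r) := by ring
  exact Nat.le_of_mul_le_mul_left this (Nat.factorial_pos r)

private lemma card_superset_le {α : Type*} [Fintype α] [DecidableEq α]
    (R : Finset α) (m : ℕ) :
    ((Finset.powersetCard m (Finset.univ : Finset α)).filter (fun S => R ⊆ S)).card
      ≤ (Fintype.card α - R.card).choose (m - R.card) := by
  classical
  have := Finset.card_le_card_of_injOn (fun S => S \ R)
    (s := (Finset.powersetCard m (Finset.univ : Finset α)).filter (fun S => R ⊆ S))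
    (t := Finset.powersetCard (m - R.card) Rᶜ) ?_ ?_
  · calc _ ≤ (Finset.powersetCard (m - R.card) Rᶜ).card := this
      _ = (Fintype.card α - R.card).choose (m - R.card) := by
        rw [Finset.card_powersetCard, Finset.card_compl]
  · intro S hS
    rw [Finset.mem_coe, Finset.mem_filter, Finset.mem_powersetCard] at hS
    obtain ⟨⟨-, hcard⟩, hRS⟩ := hS
    rw [Finset.mem_coe, Finset.mem_powersetCard]
    constructor
    · intro x hx
      rw [Finset.mem_sdiff] at hx
      simpa using hx.2
    · rw [Finset.card_sdiff_of_subset hRS, hcard]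
  · intro S1 h1 S2 h2 heq
    rw [Finset.coe_filter] at h1 h2
    simp only [Set.mem_setOf_eq] at h1 h2
    have e1 : S1 = S1 \ R ∪ R := by rw [Finset.sdiff_union_of_subset h1.2]
    have e2 : S2 = S2 \ R ∪ R := by rw [Finset.sdiff_union_of_subset h2.2]
    rw [e1, e2]
    simp only at heq
    rw [heq]

private lemma focal_ge_card {n r : ℕ} (hr : 1 ≤ r) {F : Finset (Fin n → Bool)}
    (h : ContainsFocalFamily F r) : r ≤ F.card := by
  classical
  obtain ⟨x₀, hx₀, xs, hmem, hinj, hne, -⟩ := h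
  have hsub : insert x₀ (Finset.image xs Finset.univ) ⊆ F := by
    intro y hy
    rcases Finset.mem_insert.1 hy with rfl | hy
    · exact hx₀
    · obtain ⟨j, -, rfl⟩ := Finset.mem_image.1 hy
      exact hmem j
  have hx₀n : x₀ ∉ Finset.image xs Finset.univ := by
    intro hx
    obtain ⟨j, -, hj⟩ := Finset.mem_image.1 hx
    exact hne j hj
  have hcard : (insert x₀ (Finset.image xs Finset.univ)).card = r := by
    rw [Finset.card_insert_of_notMem hx₀n, Finset.card_image_of_injective _ hinj]
    simp [Nat.sub_add_cancel hr]
  calc r = (insert x₀ (Finset.image xs Finset.univ)).card := hcard.symm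
    _ ≤ F.card := Finset.card_le_card hsub

/-- For every `r ≥ 3` there is `c > 0` such that for every `n ≥ 1` there is a family of
vectors in `{0,1}^n` with no focal family of size `r` of cardinality at least
`c·(2/r^(1/(r-1)))^n`. -/
theorem focal_family_lower_bound (r : ℕ) (hr : 3 ≤ r) :
    ∃ c : ℝ, 0 < c ∧ ∀ n : ℕ, 1 ≤ n →
      ∃ F : Finset (Fin n → Bool),
        ¬ ContainsFocalFamily F r ∧
        c * (2 / (r : ℝ) ^ ((1 : ℝ) / ((r : ℝ) - 1))) ^ n ≤ (F.card : ℝ) := by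
  classical
  obtain ⟨s, rfl⟩ : ∃ s, r = s + 3 := ⟨r - 3, by omega⟩
  refine ⟨1/8, by norm_num, ?_⟩
  intro n hn
  set r := s + 3 with hrdef
  set R1 : ℝ := (r : ℝ) ^ ((1 : ℝ) / ((r : ℝ) - 1)) with hR1
  have hrpos : (0:ℝ) < (r:ℝ) := by positivity
  have hr1 : (1:ℝ) ≤ (r:ℝ) := by exact_mod_cast Nat.one_le_iff_ne_zero.2 (by omega)
  have hr2 : (2:ℝ) ≤ (r:ℝ) := by exact_mod_cast (by omega : 2 ≤ r)
  have hR1pos : 0 < R1 := Real.rpow_pos_of_pos hrpos _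
  have hR1ge1 : 1 ≤ R1 := by
    exact Real.one_le_rpow hr1 (div_nonneg zero_le_one (by linarith))
  have hRpow : R1 ^ (s + 2) = (r : ℝ) := by
    rw [hR1, ← Real.rpow_natCast ((r:ℝ) ^ ((1:ℝ)/((r:ℝ)-1))) (s+2), ← Real.rpow_mul hrpos.le]
    have h1 : ((s + 2 : ℕ) : ℝ) = (r:ℝ) - 1 := by push_cast [hrdef]; ring
    rw [h1, one_div, inv_mul_cancel₀ (by linarith : (r:ℝ) - 1 ≠ 0), Real.rpow_one]
  set q : ℝ := 2 / R1 with hq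
  have hqpos : 0 < q := by positivity
  have hqle2 : q ≤ 2 := div_le_self (by norm_num) hR1ge1
  have hqR1 : q * R1 = 2 := div_mul_cancel₀ 2 (ne_of_gt hR1pos)
  by_cases hsmall : q ^ n < 2
  · refine ⟨{fun _ => false}, ?_, ?_⟩
    · intro hcf
      have := focal_ge_card (by omega) hcf
      simp at this
      omega
    · rw [Finset.card_singleton]
      push_cast
      nlinarith [pow_pos hqpos n]
  · push_neg at hsmall
    set x : ℝ := q ^ n / 2 with hx
    have hx1 : (1:ℝ) ≤ x := by rw [hx]; linarith
    set m : ℕ := ⌊x⌋₊ with hm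
    have hm1 : 1 ≤ m := Nat.le_floor (by exact_mod_cast hx1)
    have hmle : (m : ℝ) ≤ x := Nat.floor_le (by positivity)
    have hmhalf : x / 2 ≤ (m : ℝ) := by
      by_cases h2 : x < 2
      · have : (1:ℝ) ≤ (m:ℝ) := by exact_mod_cast hm1
        linarith
      · push_neg at h2
        have := Nat.sub_one_lt_floor x
        rw [← hm] at this
        linarith
    have hmN : m ≤ 2 ^ n := by
      have h1 : (m:ℝ) ≤ (2:ℝ)^n := by
        have : q ^ n ≤ 2 ^ n := pow_le_pow_left₀ hqpos.le hqle2 n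
        rw [hx] at hmle; linarith
      have h2 : ((2^n : ℕ):ℝ) = (2:ℝ)^n := by push_cast; ring
      exact Nat.cast_le.mp (by rw [h2]; exact h1)
    by_cases hmr : m < r
    · obtain ⟨F, hFsub, hFcard⟩ := Finset.exists_subset_card_eq (s := (Finset.univ : Finset (Fin n → Bool))) (n := m)
        (by simpa using hmN)
      refine ⟨F, ?_, ?_⟩
      · intro hcf
        have := focal_ge_card (by omega) hcf
        rw [hFcard] at this
        omega
      · rw [hFcard]
        calc (1/8 : ℝ) * q ^ n ≤ x / 2 := by rw [hx]; linarith
          _ ≤ (m : ℝ) := hmhalf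
    · push_neg at hmr
      -- Main counting argument
      set N : ℕ := 2 ^ n with hN
      have hNcard : Fintype.card (Fin n → Bool) = N := by simp [hN]
      have hmN' : m ≤ N := hmN
      set Bad : Finset ((Fin n → Bool) × (Fin (r - 1) → Fin n → Bool)) :=
        Finset.univ.filter (fun p =>
          Function.Injective p.2 ∧ (∀ j, p.2 j ≠ p.1) ∧ IsFocalWithFocus p.1 p.2) with hBadDef
      set supp : ((Fin n → Bool) × (Fin (r - 1) → Fin n → Bool)) → Finset (Fin n → Bool) :=
        fun p => insert p.1 (Finset.image p.2 Finset.univ) with hsuppDef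
      have hBadmem : ∀ p ∈ Bad, Function.Injective p.2 ∧ (∀ j, p.2 j ≠ p.1) ∧
          IsFocalWithFocus p.1 p.2 := by
        intro p hp
        rw [hBadDef, Finset.mem_filter] at hp
        exact hp.2
      have hsuppcard : ∀ p ∈ Bad, (supp p).card = r := by
        intro p hp
        obtain ⟨hinj, hne2, -⟩ := hBadmem p hp
        rw [hsuppDef]
        have hnotmem : p.1 ∉ Finset.image p.2 Finset.univ := by
          intro hx
          obtain ⟨j, -, hj⟩ := Finset.mem_image.1 hx
          exact hne2 j hj
        rw [Finset.card_insert_of_notMem hnotmem, Finset.card_image_of_injective _ hinj]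
        simp [hrdef]
      -- bound on the number of bad tuples
      have hTb : Bad.card ≤ 2 ^ n * r ^ n := by
        set Φ : ((Fin n → Bool) × (Fin (r - 1) → Fin n → Bool)) →
            ((Fin n → Bool) × (Fin n → Option (Fin (r - 1)))) :=
          fun p => (p.1, fun i =>
            if h : ∃ j', p.2 j' i ≠ p.1 i then some h.choose else none) with hΦ
        have hspec : ∀ p ∈ Bad, ∀ (j : Fin (r - 1)) (i : Fin n),
            ((Φ p).2 i = some j ↔ p.2 j i ≠ p.1 i) := by
          intro p hp j i
          obtain ⟨hinj, hne2, hfoc⟩ := hBadmem p hp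
          rw [hΦ]
          simp only
          constructor
          · intro h
            by_cases hex : ∃ j', p.2 j' i ≠ p.1 i
            · rw [dif_pos hex] at h
              have hc := hex.choose_spec
              rwa [Option.some_inj.1 h] at hc
            · rw [dif_neg hex] at h
              exact absurd h (by simp)
          · intro h
            have hex : ∃ j', p.2 j' i ≠ p.1 i := ⟨j, h⟩
            rw [dif_pos hex]
            exact congrArg some (hfoc i hex.choose j hex.choose_spec h)
        have hinjOn : Set.InjOn Φ Bad := by
          intro p hp p' hp' heq
          have h1 : p.1 = p'.1 := by simpa [hΦ] using congrArg Prod.fst heq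
          have h2 : (Φ p).2 = (Φ p').2 := congrArg Prod.snd heq
          have h3 : p.2 = p'.2 := by
            funext j i
            by_cases hji : p.2 j i = p.1 i
            · by_cases hji' : p'.2 j i = p'.1 i
              · rw [hji, hji', ← h1]
              · exfalso
                have hs1 := (hspec p' hp' j i).2 hji'
                rw [← h2] at hs1
                exact (hspec p hp j i).1 hs1 hji
            · by_cases hji' : p'.2 j i = p'.1 i
              · exfalso
                have hs1 := (hspec p hp j i).2 hji
                rw [h2] at hs1
                exact (hspec p' hp' j i).1 hs1 hji'
              · exact bool_eq_of_ne (h1 ▸ hji) hji'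
          exact Prod.ext h1 h3
        have hcard := Finset.card_le_card_of_injOn Φ
          (fun p _ => Finset.mem_univ (Φ p)) hinjOn
        calc Bad.card ≤ (Finset.univ :
              Finset ((Fin n → Bool) × (Fin n → Option (Fin (r - 1))))).card := hcard
          _ = 2 ^ n * r ^ n := by
            rw [Finset.card_univ, Fintype.card_prod, Fintype.card_fun, Fintype.card_fun]
            simp [hrdef]
      -- double counting
      have hswap : ∑ S ∈ Finset.powersetCard m (Finset.univ : Finset (Fin n → Bool)),
            (Bad.filter (fun p => supp p ⊆ S)).card
          = ∑ p ∈ Bad, ((Finset.powersetCard m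
              (Finset.univ : Finset (Fin n → Bool))).filter (fun S => supp p ⊆ S)).card := by
        simp_rw [Finset.card_filter]
        rw [Finset.sum_comm]
      have hsum : ∑ S ∈ Finset.powersetCard m (Finset.univ : Finset (Fin n → Bool)),
            (Bad.filter (fun p => supp p ⊆ S)).card
          ≤ Bad.card * (N - r).choose (m - r) := by
        rw [hswap]
        calc ∑ p ∈ Bad, ((Finset.powersetCard m
              (Finset.univ : Finset (Fin n → Bool))).filter (fun S => supp p ⊆ S)).card
            ≤ ∑ _p ∈ Bad, (N - r).choose (m - r) := by
              apply Finset.sum_le_sum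
              intro p hp
              have hcs := card_superset_le (supp p) m
              rwa [hsuppcard p hp, hNcard] at hcs
          _ = Bad.card * (N - r).choose (m - r) := by
              rw [Finset.sum_const, smul_eq_mul]
      have hpne : (Finset.powersetCard m (Finset.univ : Finset (Fin n → Bool))).Nonempty := by
        rw [Finset.powersetCard_nonempty, Finset.card_univ, hNcard]
        exact hmN'
      obtain ⟨S, hS, hSle⟩ := Finset.exists_le_of_sum_le (s := Finset.powersetCard m
            (Finset.univ : Finset (Fin n → Bool)))
          (f := fun S => (Bad.filter (fun p => supp p ⊆ S)).card * N.choose m)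
          (g := fun _ => Bad.card * (N - r).choose (m - r)) hpne (by
        rw [← Finset.sum_mul, Finset.sum_const, smul_eq_mul]
        have hc : (Finset.powersetCard m
            (Finset.univ : Finset (Fin n → Bool))).card = N.choose m := by
          rw [Finset.card_powersetCard, Finset.card_univ, hNcard]
        rw [hc]
        calc (∑ S ∈ Finset.powersetCard m (Finset.univ : Finset (Fin n → Bool)),
              (Bad.filter (fun p => supp p ⊆ S)).card) * N.choose m
            ≤ (Bad.card * (N - r).choose (m - r)) * N.choose m :=
              Nat.mul_le_mul_right _ hsum
          _ = N.choose m * (Bad.card * (N - r).choose (m - r)) := by ring)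
      have hScard : S.card = m := (Finset.mem_powersetCard.1 hS).2
      set b : ℕ := (Bad.filter (fun p => supp p ⊆ S)).card with hbdef
      set B : Finset (Fin n → Bool) := (Bad.filter (fun p => supp p ⊆ S)).image Prod.fst
        with hBdef
      refine ⟨S \ B, ?_, ?_⟩
      · rintro ⟨x₀, hx₀, xs, hmem, hinj, hne2, hfoc⟩
        have hx₀S : x₀ ∈ S := (Finset.mem_sdiff.1 hx₀).1
        have hp : ((x₀, xs) : (Fin n → Bool) × (Fin (r - 1) → Fin n → Bool))
            ∈ Bad.filter (fun p => supp p ⊆ S) := by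
          rw [Finset.mem_filter]
          refine ⟨?_, ?_⟩
          · rw [hBadDef, Finset.mem_filter]
            exact ⟨Finset.mem_univ _, hinj, hne2, hfoc⟩
          · rw [hsuppDef]
            intro y hy
            rcases Finset.mem_insert.1 hy with rfl | hy
            · exact hx₀S
            · obtain ⟨j, -, rfl⟩ := Finset.mem_image.1 hy
              exact (Finset.mem_sdiff.1 (hmem j)).1
        have hxB : x₀ ∈ B := by
          rw [hBdef]
          exact Finset.mem_image.2 ⟨(x₀, xs), hp, rfl⟩
        exact (Finset.mem_sdiff.1 hx₀).2 hxB
      · -- cardinality bound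
        have hCpos : 0 < (N - r).choose (m - r) :=
          Nat.choose_pos (Nat.sub_le_sub_right hmN' r)
        have hNrpos : 0 < N.choose r := Nat.choose_pos (hmr.trans hmN')
        have hid : N.choose m * m.choose r = N.choose r * (N - r).choose (m - r) :=
          Nat.choose_mul hmr
        have step1 : b * N.choose r ≤ Bad.card * m.choose r := by
          apply Nat.le_of_mul_le_mul_right _ hCpos
          calc b * N.choose r * (N - r).choose (m - r)
              = b * (N.choose m * m.choose r) := by rw [hid]; ring
            _ = (b * N.choose m) * m.choose r := by ring
            _ ≤ (Bad.card * (N - r).choose (m - r)) * m.choose r :=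
                Nat.mul_le_mul_right _ hSle
            _ = Bad.card * m.choose r * (N - r).choose (m - r) := by ring
        have step2 : b * N ^ r ≤ Bad.card * m ^ r := by
          apply Nat.le_of_mul_le_mul_right _ hNrpos
          calc b * N ^ r * N.choose r = (b * N.choose r) * N ^ r := by ring
            _ ≤ (Bad.card * m.choose r) * N ^ r := Nat.mul_le_mul_right _ step1
            _ = Bad.card * (m.choose r * N ^ r) := by ring
            _ ≤ Bad.card * (N.choose r * m ^ r) :=
                Nat.mul_le_mul_left _ (desc_pow_le hmN')
            _ = Bad.card * m ^ r * N.choose r := by ring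
        have hfinal_nat : b * N ^ r ≤ 2 ^ n * r ^ n * m ^ r :=
          step2.trans (Nat.mul_le_mul_right _ hTb)
        have hbR : (b : ℝ) * ((2:ℝ) ^ n) ^ r ≤ (2:ℝ) ^ n * (r : ℝ) ^ n * (m : ℝ) ^ r := by
          have := (Nat.cast_le (α := ℝ)).2 hfinal_nat
          push_cast [hN] at this
          convert this using 2 <;> push_cast <;> ring
        -- the key analytic estimate
        have hR1n : R1 ^ (n * (s + 2)) = (r : ℝ) ^ n := by
          rw [mul_comm, pow_mul, hRpow]
        have hqn2 : q ^ (n * (s + 2)) * R1 ^ (n * (s + 2)) = 2 ^ (n * (s + 2)) := by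
          rw [← mul_pow, hqR1]
        have heq : (2:ℝ) ^ n * (r : ℝ) ^ n * (x ^ (s + 2) * 2 ^ (s + 2))
            = ((2:ℝ) ^ n) ^ r := by
          have h1 : x * 2 = q ^ n := by rw [hx]; ring
          have h2 : x ^ (s + 2) * (2:ℝ) ^ (s + 2) = q ^ (n * (s + 2)) := by
            rw [← mul_pow, h1, ← pow_mul]
          have h3 : (r : ℝ) ^ n * q ^ (n * (s + 2)) = 2 ^ (n * (s + 2)) := by
            rw [← hR1n, mul_comm, hqn2]
          rw [h2]
          calc (2:ℝ) ^ n * (r : ℝ) ^ n * q ^ (n * (s + 2))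
              = (2:ℝ) ^ n * ((r : ℝ) ^ n * q ^ (n * (s + 2))) := by ring
            _ = (2:ℝ) ^ n * 2 ^ (n * (s + 2)) := by rw [h3]
            _ = (2:ℝ) ^ (n + n * (s + 2)) := (pow_add 2 n _).symm
            _ = (2:ℝ) ^ (n * r) := by rw [show n + n * (s + 2) = n * r from by rw [hrdef]; ring]
            _ = ((2:ℝ) ^ n) ^ r := pow_mul 2 n r
        have hA : 4 * ((2:ℝ) ^ n * (r : ℝ) ^ n * (m : ℝ) ^ (s + 2)) ≤ ((2:ℝ) ^ n) ^ r := by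
          have hmx : (m : ℝ) ^ (s + 2) ≤ x ^ (s + 2) :=
            pow_le_pow_left₀ (Nat.cast_nonneg m) hmle _
          have h4 : (4:ℝ) ≤ 2 ^ (s + 2) := by
            calc (4:ℝ) = 2 ^ 2 := by norm_num
              _ ≤ 2 ^ (s + 2) := pow_le_pow_right₀ one_le_two (by omega)
          calc 4 * ((2:ℝ) ^ n * (r : ℝ) ^ n * (m : ℝ) ^ (s + 2))
              ≤ 2 ^ (s + 2) * ((2:ℝ) ^ n * (r : ℝ) ^ n * x ^ (s + 2)) := by
                have hfac : (2:ℝ) ^ n * (r : ℝ) ^ n * (m : ℝ) ^ (s + 2)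
                    ≤ (2:ℝ) ^ n * (r : ℝ) ^ n * x ^ (s + 2) := by
                  apply mul_le_mul_of_nonneg_left hmx
                  positivity
                have hnn : (0:ℝ) ≤ (2:ℝ) ^ n * (r : ℝ) ^ n * (m : ℝ) ^ (s + 2) := by positivity
                nlinarith
            _ = (2:ℝ) ^ n * (r : ℝ) ^ n * (x ^ (s + 2) * 2 ^ (s + 2)) := by ring
            _ = ((2:ℝ) ^ n) ^ r := heq
        have hb4 : 4 * (b : ℝ) ≤ (m : ℝ) := by
          have hpos : (0:ℝ) < ((2:ℝ) ^ n) ^ r := by positivity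
          apply le_of_mul_le_mul_right _ hpos
          have hmr' : (m : ℝ) ^ r = (m : ℝ) ^ (s + 2) * (m : ℝ) := by
            rw [hrdef, pow_succ]
          calc 4 * (b : ℝ) * ((2:ℝ) ^ n) ^ r = 4 * ((b : ℝ) * ((2:ℝ) ^ n) ^ r) := by ring
            _ ≤ 4 * ((2:ℝ) ^ n * (r : ℝ) ^ n * (m : ℝ) ^ r) := by linarith
            _ = 4 * ((2:ℝ) ^ n * (r : ℝ) ^ n * (m : ℝ) ^ (s + 2)) * (m : ℝ) := by
                rw [hmr']; ring
            _ ≤ ((2:ℝ) ^ n) ^ r * (m : ℝ) :=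
                mul_le_mul_of_nonneg_right hA (Nat.cast_nonneg m)
            _ = (m : ℝ) * ((2:ℝ) ^ n) ^ r := by ring
        have hbm : b ≤ m := by
          have : (b : ℝ) ≤ (m : ℝ) := by linarith [Nat.cast_nonneg (α := ℝ) b]
          exact_mod_cast this
        have hBcard : B.card ≤ b := Finset.card_image_le
        have hsdiff : m - b ≤ (S \ B).card := by
          calc m - b ≤ S.card - B.card := by
                rw [hScard]
                exact Nat.sub_le_sub_left hBcard m
            _ ≤ (S \ B).card := Finset.le_card_sdiff B S
        have hFR : (m : ℝ) - (b : ℝ) ≤ ((S \ B).card : ℝ) := by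
          have h6 : ((m - b : ℕ) : ℝ) = (m : ℝ) - (b : ℝ) := by
            rw [Nat.cast_sub hbm]
          rw [← h6]
          exact_mod_cast hsdiff
        calc (1/8 : ℝ) * q ^ n = x / 4 := by rw [hx]; ring
          _ ≤ (m : ℝ) - (b : ℝ) := by linarith
          _ ≤ ((S \ B).card : ℝ) := hFR
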